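/- In a two-sided matching market (M, W, P) with strict preferences, the set of matched persons is the same in every stable matching: for any two stable matchings μ and λ, a person p ∈ M ∪ W is matched (to someone other than themselves) in μ if and only if p is matched in λ. -/

import Mathlib

namespace Stmt0

/-- Strict preferences of a person over potential partners in `W`, together with the
option of staying single (`none`), encoded by a rank function that is injective on the
relevant alternatives; a higher rank means more preferred. -/
def StrictPref {β : Type*} (pref : Option β → ℕ) (W : Finset β) : Prop :=
  Set.InjOn pref (insert none (Option.some '' (W : Set β)))

/-- A (one-to-one) matching on the two-sided market with men `M` and women `W`:
`mu m` is the partner of man `m` (`none` = single) and `nu w` the partner of woman `w`. -/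
structure Matching {α β : Type*} (M : Finset α) (W : Finset β) where
  mu : α → Option β
  nu : β → Option α
  consistent : ∀ m w, mu m = some w ↔ nu w = some m
  suppM : ∀ m, m ∉ M → mu m = none
  suppW : ∀ w, w ∉ W → nu w = none

variable {α β : Type*} (M : Finset α) (W : Finset β)
  (prefM : α → Option β → ℕ) (prefW : β → Option α → ℕ)

/-- Individual rationality: everyone prefers their partner to staying single. -/
def IndRational (μ : Matching M W) : Prop :=
  (∀ m ∈ M, ∀ w, μ.mu m = some w → prefM m none < prefM m (some w)) ∧
  (∀ w ∈ W, ∀ m, μ.nu w = some m → prefW w none < prefW w (some m))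

/-- The pair `(m, w)` blocks `μ` if both prefer each other to their current partners. -/
def Blocks (μ : Matching M W) (m : α) (w : β) : Prop :=
  m ∈ M ∧ w ∈ W ∧ prefM m (μ.mu m) < prefM m (some w) ∧
    prefW w (μ.nu w) < prefW w (some m)

/-- A matching is stable if it is individually rational and not blocked by any pair. -/
def Stable (μ : Matching M W) : Prop :=
  IndRational M W prefM prefW μ ∧ ∀ m w, ¬ Blocks M W prefM prefW μ m w

/-- Swap the two sides of a matching. -/
def Matching.swap (μ : Matching M W) : Matching W M where
  mu := μ.nu
  nu := μ.mu
  consistent := fun w m => (μ.consistent m w).symm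
  suppM := μ.suppW
  suppW := μ.suppM

lemma Stable.swap {μ : Matching M W} (h : Stable M W prefM prefW μ) :
    Stable W M prefW prefM (μ.swap M W) := by
  obtain ⟨⟨h1, h2⟩, hb⟩ := h
  refine ⟨⟨h2, h1⟩, fun w m hblk => ?_⟩
  obtain ⟨hw, hm, p1, p2⟩ := hblk
  exact hb m w ⟨hm, hw, p2, p1⟩

/-- Key lemma: if `m0` is matched in `μ` but single in `lam`, contradiction. -/
lemma key (hM : ∀ m ∈ M, StrictPref (prefM m) W) (hW : ∀ w ∈ W, StrictPref (prefW w) M)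
    (μ lam : Matching M W)
    (hμ : Stable M W prefM prefW μ) (hlam : Stable M W prefM prefW lam)
    (m0 : α) (hm0 : m0 ∈ M) (h1 : (μ.mu m0).isSome) (h2 : lam.mu m0 = none) : False := by
  classical
  -- Good m : m is matched in μ and strictly prefers μ-partner to lam-partner
  set Good : α → Prop :=
    fun m => m ∈ M ∧ ∃ w, μ.mu m = some w ∧ prefM m (lam.mu m) < prefM m (some w) with hGood
  -- the "next man" function
  set next : α → α := fun m => ((μ.mu m).bind lam.nu).getD m with hnext
  have step : ∀ m, Good m → Good (next m) ∧ lam.mu (next m) = μ.mu m := by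
    intro m hg
    obtain ⟨hmM, w, hw, hpref⟩ := hg
    have hnuw : μ.nu w = some m := (μ.consistent m w).mp hw
    have hwW : w ∈ W := by
      by_contra hc
      simp [μ.suppW w hc] at hnuw
    -- w weakly prefers her lam-partner to m
    have hnb := hlam.2 m w
    have hle : prefW w (some m) ≤ prefW w (lam.nu w) := by
      by_contra hc
      exact hnb ⟨hmM, hwW, hpref, lt_of_not_ge hc⟩
    -- lam.nu w is some
    have hns : lam.nu w ≠ none := by
      intro hc
      rw [hc] at hle
      exact absurd (hμ.1.2 w hwW m hnuw) (not_lt_of_ge hle)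
    obtain ⟨m', hm'⟩ := Option.ne_none_iff_exists'.mp hns
    have hlm' : lam.mu m' = some w := (lam.consistent m' w).mpr hm'
    have hm'M : m' ∈ M := by
      by_contra hc
      simp [lam.suppM m' hc] at hlm'
    have hmne : m' ≠ m := by
      intro hc
      rw [hc] at hlm'
      rw [hlm'] at hpref
      exact lt_irrefl _ hpref
    -- strict preference of w for m' over m
    have hlt : prefW w (some m) < prefW w (some m') := by
      rw [hm'] at hle
      refine lt_of_le_of_ne hle (fun hc => hmne ?_)
      have := hW w hwW
        (Set.mem_insert_of_mem _ ⟨m, by simpa using hmM, rfl⟩)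
        (Set.mem_insert_of_mem _ ⟨m', by simpa using hm'M, rfl⟩) hc
      exact (Option.some_injective _ this).symm
    -- m' weakly prefers his μ-partner to w
    have hnb2 := hμ.2 m' w
    have hle2 : prefM m' (some w) ≤ prefM m' (μ.mu m') := by
      by_contra hc
      refine hnb2 ⟨hm'M, hwW, lt_of_not_ge hc, ?_⟩
      rw [hnuw]
      exact hlt
    have hms : μ.mu m' ≠ none := by
      intro hc
      rw [hc] at hle2
      exact absurd (hlam.1.1 m' hm'M w hlm') (not_lt_of_ge hle2)
    obtain ⟨w', hw'⟩ := Option.ne_none_iff_exists'.mp hms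
    have hw'W : w' ∈ W := by
      by_contra hc
      have := (μ.consistent m' w').mp hw'
      simp [μ.suppW w' hc] at this
    have hwne : w' ≠ w := by
      intro hc
      rw [hc] at hw'
      have := (μ.consistent m' w).mp hw'
      rw [hnuw] at this
      exact hmne (Option.some_injective _ this.symm)
    have hlt2 : prefM m' (some w) < prefM m' (some w') := by
      rw [hw'] at hle2
      refine lt_of_le_of_ne hle2 (fun hc => hwne ?_)
      have := hM m' hm'M
        (Set.mem_insert_of_mem _ ⟨w, by simpa using hwW, rfl⟩)
        (Set.mem_insert_of_mem _ ⟨w', by simpa using hw'W, rfl⟩) hc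
      exact (Option.some_injective _ this).symm
    have hnexteq : next m = m' := by
      simp only [hnext]
      rw [hw]
      simp [hm']
    refine ⟨?_, ?_⟩
    · rw [hnexteq]
      exact ⟨hm'M, w', hw', by rw [hlm']; exact hlt2⟩
    · rw [hnexteq, hlm', hw]
  -- the finite set of Good men
  set S : Finset α := M.filter Good with hS
  have hm0S : m0 ∈ S := by
    obtain ⟨w0, hw0⟩ := Option.isSome_iff_exists.mp h1
    refine Finset.mem_filter.mpr ⟨hm0, hm0, w0, hw0, ?_⟩
    rw [h2]
    exact hμ.1.1 m0 hm0 w0 hw0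
  have hmaps : ∀ m ∈ S, next m ∈ S := by
    intro m hm
    have hg := (Finset.mem_filter.mp hm).2
    have := (step m hg).1
    exact Finset.mem_filter.mpr ⟨this.1, this⟩
  have hinj : Set.InjOn next S := by
    intro m1 hm1 m2 hm2 heq
    have g1 := (Finset.mem_filter.mp hm1).2
    have g2 := (Finset.mem_filter.mp hm2).2
    have e1 := (step m1 g1).2
    have e2 := (step m2 g2).2
    rw [heq] at e1
    obtain ⟨_, w2, hw2, _⟩ := g2
    have : μ.mu m1 = some w2 := by rw [← e1, e2, hw2]
    have c1 := (μ.consistent m1 w2).mp this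
    have c2 := (μ.consistent m2 w2).mp hw2
    rw [c1] at c2
    exact Option.some_injective _ c2
  have himg : S.image next = S := by
    apply Finset.eq_of_subset_of_card_le
    · intro x hx
      obtain ⟨m, hm, rfl⟩ := Finset.mem_image.mp hx
      exact hmaps m hm
    · rw [Finset.card_image_of_injOn hinj]
  have : m0 ∈ S.image next := by rw [himg]; exact hm0S
  obtain ⟨m, hm, hmeq⟩ := Finset.mem_image.mp this
  have hg := (Finset.mem_filter.mp hm).2
  have e := (step m hg).2
  rw [hmeq, h2] at e
  obtain ⟨_, w, hw, _⟩ := hg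
  rw [hw] at e
  cases e

/-- In a two-sided matching market with strict preferences, the set
of matched persons is the same in every stable matching. -/
theorem matched_set_invariant
    (hM : ∀ m ∈ M, StrictPref (prefM m) W) (hW : ∀ w ∈ W, StrictPref (prefW w) M)
    (μ lam : Matching M W)
    (hμ : Stable M W prefM prefW μ) (hlam : Stable M W prefM prefW lam) :
    (∀ m ∈ M, (μ.mu m).isSome ↔ (lam.mu m).isSome) ∧
    (∀ w ∈ W, (μ.nu w).isSome ↔ (lam.nu w).isSome) := by
  constructor
  · intro m hm
    constructor
    · intro h
      by_contra hc
      exact key M W prefM prefW hM hW μ lam hμ hlam m hm h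
        (Option.not_isSome_iff_eq_none.mp hc)
    · intro h
      by_contra hc
      exact key M W prefM prefW hM hW lam μ hlam hμ m hm h
        (Option.not_isSome_iff_eq_none.mp hc)
  · intro w hw
    constructor
    · intro h
      by_contra hc
      exact key W M prefW prefM hW hM (μ.swap M W) (lam.swap M W)
        (hμ.swap M W prefM prefW) (hlam.swap M W prefM prefW) w hw h
        (Option.not_isSome_iff_eq_none.mp hc)
    · intro h
      by_contra hc
      exact key W M prefW prefM hW hM (lam.swap M W) (μ.swap M W)
        (hlam.swap M W prefM prefW) (hμ.swap M W prefM prefW) w hw h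
        (Option.not_isSome_iff_eq_none.mp hc)

end Stmt0
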